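/- For every real r ≥ 1, the function f(x) = h_x^{(r)}/x^{r̄} − h_x^{(r+1)}/x^{\overline{r+1}} is strictly decreasing on (0, ∞); that is, for all 0 < x < y one has f(y) < f(x). -/

import Mathlib

open MeasureTheory Filter Topology

/-- The digamma function `ψ(x) = Γ'(x)/Γ(x)`. -/
noncomputable def digamma (x : ℝ) : ℝ := deriv Real.Gamma x / Real.Gamma x

/-- The rising factorial `x^{r̄} = Γ(x+r)/Γ(x)`. -/
noncomputable def rise (x r : ℝ) : ℝ := Real.Gamma (x + r) / Real.Gamma x

/-- The analytic extension of the hyperharmonic numbers: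
`h_x^{(r)} = (x^{r̄}/(x Γ(r)))(ψ(x+r) − ψ(r))` for `r > 0`, and `h_x^{(0)} = 1/x`. -/
noncomputable def hyp (r x : ℝ) : ℝ :=
  if r = 0 then 1 / x
  else rise x r / (x * Real.Gamma r) * (digamma (x + r) - digamma r)

/-- `y_n(r) = ∑_{k=1}^n h_k^{(r)}/k^r − ∫_1^n h_x^{(r)}/x^r dx`. -/
noncomputable def yseq (r : ℝ) (n : ℕ) : ℝ :=
  ∑ k ∈ Finset.Icc 1 n, hyp r k / (k : ℝ) ^ r - ∫ x in (1:ℝ)..(n:ℝ), hyp r x / x ^ r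

/-- `z_n(r) = ∑_{k=1}^{n-1} h_k^{(r)}/k^r − ∫_1^n h_x^{(r)}/x^r dx`. -/
noncomputable def zseq (r : ℝ) (n : ℕ) : ℝ :=
  ∑ k ∈ Finset.Icc 1 (n - 1), hyp r k / (k : ℝ) ^ r - ∫ x in (1:ℝ)..(n:ℝ), hyp r x / x ^ r

/-- `b_n(r) = ∑_{k=1}^n h_k^{(r)}/k^{r̄} − ∫_1^n h_x^{(r)}/x^{r̄} dx`. -/
noncomputable def bseq (r : ℝ) (n : ℕ) : ℝ :=
  ∑ k ∈ Finset.Icc 1 n, hyp r k / rise k r - ∫ x in (1:ℝ)..(n:ℝ), hyp r x / rise x r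

/-- `a_n(r) = ∑_{k=1}^{n-1} h_k^{(r)}/k^{r̄} − ∫_1^n h_x^{(r)}/x^{r̄} dx`. -/
noncomputable def aseq (r : ℝ) (n : ℕ) : ℝ :=
  ∑ k ∈ Finset.Icc 1 (n - 1), hyp r k / rise k r - ∫ x in (1:ℝ)..(n:ℝ), hyp r x / rise x r

/- ### Auxiliary digamma theory -/

lemma gamma_ne_neg_nat {x : ℝ} (hx : 0 < x) : ∀ m : ℕ, x ≠ -m := by
  intro m h
  have : (0:ℝ) ≤ (m:ℝ) := Nat.cast_nonneg m
  nlinarith [hx]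

lemma hasDerivAt_Gamma' {x : ℝ} (hx : 0 < x) :
    HasDerivAt Real.Gamma (deriv Real.Gamma x) x :=
  (Real.differentiableAt_Gamma (gamma_ne_neg_nat hx)).hasDerivAt

/-- Recurrence for digamma: `ψ(x+1) = ψ(x) + 1/x` for `x > 0`. -/
lemma digamma_add_one {x : ℝ} (hx : 0 < x) : digamma (x + 1) = digamma x + 1 / x := by
  have hx1 : (0:ℝ) < x + 1 := by linarith
  have h1 : HasDerivAt (fun y => Real.Gamma (y + 1)) (deriv Real.Gamma (x + 1)) x := by
    have := (hasDerivAt_Gamma' hx1).comp x ((hasDerivAt_id x).add_const 1)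
    rw [mul_one] at this; exact this
  have h2 : HasDerivAt (fun y => y * Real.Gamma y)
      (1 * Real.Gamma x + x * deriv Real.Gamma x) x :=
    (hasDerivAt_id x).mul (hasDerivAt_Gamma' hx)
  have hev : (fun y => Real.Gamma (y + 1)) =ᶠ[nhds x] fun y => y * Real.Gamma y := by
    filter_upwards [eventually_gt_nhds hx] with y hy
    exact Real.Gamma_add_one (ne_of_gt hy)
  have h1' : HasDerivAt (fun y => y * Real.Gamma y) (deriv Real.Gamma (x + 1)) x :=
    h1.congr_of_eventuallyEq hev.symm
  have hder : deriv Real.Gamma (x + 1) = Real.Gamma x + x * deriv Real.Gamma x := by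
    have := h1'.unique h2; linarith [this]
  have hGx : Real.Gamma x ≠ 0 := (Real.Gamma_pos_of_pos hx).ne'
  have hxne : x ≠ 0 := hx.ne'
  unfold digamma
  rw [hder, Real.Gamma_add_one hxne]
  field_simp
  ring

/-- `ψ(x+N) = ψ(x) + ∑_{n<N} 1/(x+n)`. -/
lemma digamma_add_nat {x : ℝ} (hx : 0 < x) (N : ℕ) :
    digamma (x + N) = digamma x + ∑ n ∈ Finset.range N, 1 / (x + n) := by
  induction N with
  | zero => simp
  | succ N ih =>
    have hxN : 0 < x + N := by positivity
    have : x + (N + 1 : ℕ) = (x + N) + 1 := by push_cast; ring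
    rw [this, digamma_add_one hxN, ih, Finset.sum_range_succ]
    ring

lemma hasDerivAt_logGamma {x : ℝ} (hx : 0 < x) :
    HasDerivAt (Real.log ∘ Real.Gamma) (digamma x) x :=
  (hasDerivAt_Gamma' hx).log (Real.Gamma_pos_of_pos hx).ne'

/-- digamma is monotone on `(0,∞)`. -/
lemma digamma_monotone {a b : ℝ} (ha : 0 < a) (hab : a ≤ b) : digamma a ≤ digamma b := by
  have hb : 0 < b := lt_of_lt_of_le ha hab
  have hmono := Real.convexOn_log_Gamma.monotoneOn_deriv
    (fun x hx => ((hasDerivAt_logGamma hx).differentiableAt))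
  have hda : deriv (Real.log ∘ Real.Gamma) a = digamma a := (hasDerivAt_logGamma ha).deriv
  have hdb : deriv (Real.log ∘ Real.Gamma) b = digamma b := (hasDerivAt_logGamma hb).deriv
  have := hmono (Set.mem_Ioi.mpr ha) (Set.mem_Ioi.mpr hb) hab
  rwa [hda, hdb] at this

/-- The series for differences of digamma. -/
lemma digamma_sub_hasSum {u v : ℝ} (hu : 0 < u) (huv : u ≤ v) :
    HasSum (fun n : ℕ => 1 / (u + n) - 1 / (v + n)) (digamma v - digamma u) := by
  have hv : 0 < v := lt_of_lt_of_le hu huv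
  have hnonneg : ∀ n : ℕ, 0 ≤ 1 / (u + n) - 1 / (v + n) := by
    intro n
    have h1 : 0 < u + n := by positivity
    have h2 : 0 < v + n := by positivity
    have : 1 / (v + n) ≤ 1 / (u + n) := by
      apply one_div_le_one_div_of_le h1; linarith
    linarith
  rw [hasSum_iff_tendsto_nat_of_nonneg hnonneg]
  -- partial sums: ∑_{n<N} (1/(u+n) - 1/(v+n)) = (ψ v - ψ u) - (ψ(v+N) - ψ(u+N))
  have hps : ∀ N : ℕ, ∑ n ∈ Finset.range N, (1 / (u + n) - 1 / (v + n)) =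
      (digamma v - digamma u) - (digamma (v + N) - digamma (u + N)) := by
    intro N
    rw [Finset.sum_sub_distrib]
    have h1 := digamma_add_nat hu N
    have h2 := digamma_add_nat hv N
    linarith
  simp only [hps]
  -- show ψ(v+N) - ψ(u+N) → 0
  have key : Tendsto (fun N : ℕ => digamma (v + N) - digamma (u + N)) atTop (nhds 0) := by
    obtain ⟨k, hk⟩ := exists_nat_ge (v - u)
    have hub : ∀ N : ℕ, digamma (v + N) - digamma (u + N) ≤ k / (u + N) := by
      intro N
      have huN : 0 < u + N := by positivity
      have h1 : digamma (v + N) ≤ digamma ((u + N) + k) := by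
        apply digamma_monotone (by positivity)
        push_cast; linarith
      have h2 : digamma ((u + N) + k) = digamma (u + N) +
          ∑ n ∈ Finset.range k, 1 / ((u + N) + n) := digamma_add_nat huN k
      have h3 : ∑ n ∈ Finset.range k, 1 / ((u + N) + n) ≤ ∑ n ∈ Finset.range k, 1 / (u + N) := by
        apply Finset.sum_le_sum
        intro i _
        apply one_div_le_one_div_of_le huN
        have : (0:ℝ) ≤ (i:ℝ) := Nat.cast_nonneg i
        linarith
      have h4 : ∑ n ∈ Finset.range k, 1 / (u + N) = k / (u + N) := by
        rw [Finset.sum_const, Finset.card_range]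
        simp [div_eq_mul_inv, mul_comm]
      linarith
    have hlb : ∀ N : ℕ, 0 ≤ digamma (v + N) - digamma (u + N) := by
      intro N
      have : digamma (u + N) ≤ digamma (v + N) :=
        digamma_monotone (by positivity) (by linarith)
      linarith
    have htend : Tendsto (fun N : ℕ => (k:ℝ) / (u + N)) atTop (nhds 0) := by
      apply Tendsto.div_atTop tendsto_const_nhds
      apply tendsto_atTop_add_const_left
      exact tendsto_natCast_atTop_atTop
    exact squeeze_zero hlb hub htend
  have h := (tendsto_const_nhds (x := digamma v - digamma u)).sub key
  simpa using h

/-- Series for the slope `(ψ(x+r) − ψ(r))/x`. -/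
lemma slope_hasSum {r x : ℝ} (hr : 0 < r) (hx : 0 < x) :
    HasSum (fun n : ℕ => 1 / ((r + n) * (x + r + n))) ((digamma (x + r) - digamma r) / x) := by
  have h := (digamma_sub_hasSum hr (by linarith : r ≤ x + r)).div_const x
  apply h.congr_fun
  intro n
  have h1 : (0:ℝ) < r + n := by positivity
  have h2 : (0:ℝ) < x + r + n := by positivity
  field_simp
  ring

/-- The slope is antitone. -/
lemma slope_antitone {r x y : ℝ} (hr : 0 < r) (hx : 0 < x) (hxy : x < y) :
    (digamma (y + r) - digamma r) / y ≤ (digamma (x + r) - digamma r) / x := by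
  have hy : 0 < y := hx.trans hxy
  apply hasSum_le _ (slope_hasSum hr hy) (slope_hasSum hr hx)
  intro n
  have h1 : (0:ℝ) < r + n := by positivity
  have h2 : (0:ℝ) < x + r + n := by positivity
  have h3 : (0:ℝ) < y + r + n := by positivity
  apply one_div_le_one_div_of_le (by positivity)
  nlinarith

/-- The basic simplification `h_x^{(r)}/x^{r̄} = (ψ(x+r) − ψ(r))/(x Γ(r))`. -/
lemma hyp_div_rise {r x : ℝ} (hr : 0 < r) (hx : 0 < x) :
    hyp r x / rise x r = (digamma (x + r) - digamma r) / (x * Real.Gamma r) := by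
  have hrise : rise x r ≠ 0 := by
    unfold rise
    exact div_ne_zero (Real.Gamma_pos_of_pos (by linarith)).ne' (Real.Gamma_pos_of_pos hx).ne'
  unfold hyp
  rw [if_neg hr.ne']
  field_simp

theorem f_strictAnti (r : ℝ) (hr : 1 ≤ r) :
    ∀ x y : ℝ, 0 < x → x < y →
      hyp r y / rise y r - hyp (r + 1) y / rise y (r + 1) <
        hyp r x / rise x r - hyp (r + 1) x / rise x (r + 1) := by
  intro x y hx hxy
  have hy : 0 < y := hx.trans hxy
  have hr0 : 0 < r := by linarith
  have hr1 : 0 < r + 1 := by linarith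
  have hGr : 0 < Real.Gamma r := Real.Gamma_pos_of_pos hr0
  rw [hyp_div_rise hr0 hx, hyp_div_rise hr0 hy, hyp_div_rise hr1 hx, hyp_div_rise hr1 hy]
  have hrec : ∀ z : ℝ, 0 < z →
      (digamma (z + r) - digamma r) / (z * Real.Gamma r) -
        (digamma (z + (r + 1)) - digamma (r + 1)) / (z * Real.Gamma (r + 1)) =
      (1 / Real.Gamma r) * ((1 - 1 / r) * ((digamma (z + r) - digamma r) / z)
        + 1 / (r ^ 2 * (z + r))) := by
    intro z hz
    have hzr : 0 < z + r := by linarith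
    have h1 : digamma (z + (r + 1)) = digamma (z + r) + 1 / (z + r) := by
      rw [show z + (r + 1) = (z + r) + 1 by ring, digamma_add_one hzr]
    have h2 : digamma (r + 1) = digamma r + 1 / r := digamma_add_one hr0
    have h3 : Real.Gamma (r + 1) = r * Real.Gamma r := by
      rw [Real.Gamma_add_one hr0.ne']
    rw [h1, h2, h3]
    field_simp
    ring
  rw [hrec x hx, hrec y hy]
  apply mul_lt_mul_of_pos_left _ (by positivity : (0:ℝ) < 1 / Real.Gamma r)
  have hslope := slope_antitone hr0 hx hxy
  have hcoef : (0:ℝ) ≤ 1 - 1 / r := by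
    have : 1 / r ≤ 1 := by
      rw [div_le_one hr0]; exact hr
    linarith
  have hterm : 1 / (r ^ 2 * (y + r)) < 1 / (r ^ 2 * (x + r)) := by
    apply one_div_lt_one_div_of_lt (by positivity)
    have h2 : (0:ℝ) < r ^ 2 := by positivity
    nlinarith
  have := mul_le_mul_of_nonneg_left hslope hcoef
  linarith
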